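/- For every nonnegative integer n, every r ≥ 0 and every prime p ≥ 3, evaluating the r-derangement polynomial at 2 gives D_{n+p,r}(2) ≡ D_{n,r}(2) (mod p). -/

import Mathlib

open Polynomial Finset

/-- The r-derangement polynomial `D_{n,r}(x) = ∑_{k=0}^n C(n,k)·C(k+r,k)·k!·(x-1)^(n-k)`. -/
noncomputable def rDerPoly (n r : ℕ) : Polynomial ℤ :=
  ∑ k ∈ Finset.range (n + 1),
    ((n.choose k * (k + r).choose k * k.factorial : ℤ)) • (X - 1) ^ (n - k)

lemma rDerPoly_eval_two_eq (n r : ℕ) :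
    (rDerPoly n r).eval 2 = ∑ k ∈ Finset.range (n + 1),
      (n.choose k * (k + r).choose k * k.factorial : ℤ) := by
  simp [rDerPoly, eval_finset_sum]

lemma choose_add_p (p : ℕ) (hp : p.Prime) (n k : ℕ) (hk : k < p) :
    ((n + p).choose k : ZMod p) = (n.choose k : ZMod p) := by
  rw [Nat.add_choose_eq]
  push_cast
  rw [Finset.sum_eq_single (k, 0)]
  · simp
  · rintro ⟨i, j⟩ hij hne
    rw [Finset.HasAntidiagonal.mem_antidiagonal] at hij
    have hj : j ≠ 0 := by
      rintro rfl
      exact hne (by simp at hij ⊢; omega)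
    have hjp : j < p := by omega
    have hdvd : p ∣ p.choose j := hp.dvd_choose_self hj hjp
    have : ((p.choose j : ℕ) : ZMod p) = 0 :=
      (ZMod.natCast_eq_zero_iff _ _).mpr hdvd
    simp [this]
  · intro h
    exact absurd (by simp [Finset.HasAntidiagonal.mem_antidiagonal]) h

theorem rDerPoly_eval_two (n r : ℕ) (p : ℕ) (hp : p.Prime) (hp3 : 3 ≤ p) :
    (rDerPoly (n + p) r).eval 2 ≡ (rDerPoly n r).eval 2 [ZMOD p] := by
  have : ((((rDerPoly (n + p) r).eval 2 : ℤ)) : ZMod p)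
      = (((rDerPoly n r).eval 2 : ℤ) : ZMod p) := by
    rw [rDerPoly_eval_two_eq, rDerPoly_eval_two_eq]
    push_cast
    have hterm : ∀ k ∈ Finset.range (n + p + 1),
        (((n + p).choose k : ZMod p) * ((k + r).choose k : ZMod p) * (k.factorial : ZMod p))
          = ((n.choose k : ZMod p) * ((k + r).choose k : ZMod p) * (k.factorial : ZMod p)) := by
      intro k _
      rcases lt_or_ge k p with h | h
      · rw [choose_add_p p hp n k h]
      · have : (k.factorial : ZMod p) = 0 :=
          (ZMod.natCast_eq_zero_iff _ _).mpr (Nat.dvd_factorial hp.pos h)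
        simp [this]
    rw [Finset.sum_congr rfl hterm]
    symm
    apply Finset.sum_subset
    · exact Finset.range_subset_range.mpr (by omega)
    · intro k hk hnk
      rw [Finset.mem_range] at hk hnk
      have hn : n < k := by omega
      simp [Nat.choose_eq_zero_of_lt hn]
  exact (ZMod.intCast_eq_intCast_iff _ _ _).mp this
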